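/- Assume conditions (C1)–(C4). Then, regarding V as a module over the polynomial ring k[X] with X acting by the endomorphism T, V is a free k[X]-module admitting an infinite free module basis; in particular V is free of infinite rank over k[X]. -/

import Mathlib

namespace Stmt5Aux

open Polynomial

variable {k : Type*} [Field k] {V : Type*} [AddCommGroup V] [Module k V]

/-- The projection onto the `N`-th summand of an internal direct sum, as an
endomorphism of `V`. -/
noncomputable def P (C : ℕ → Submodule k V) (hC : DirectSum.IsInternal C) (N : ℕ) :
    V →ₗ[k] V :=
  (C N).subtype ∘ₗ (DirectSum.component k ℕ (fun n => ↥(C n)) N) ∘ₗ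
    ((LinearEquiv.ofBijective (DirectSum.coeLinearMap C) hC).symm).toLinearMap

lemma P_apply (C : ℕ → Submodule k V) (hC : DirectSum.IsInternal C) (N : ℕ) (v : V) :
    P C hC N v = (((LinearEquiv.ofBijective (DirectSum.coeLinearMap C) hC).symm v) N : V) :=
  rfl

lemma P_mem (C : ℕ → Submodule k V) (hC : DirectSum.IsInternal C) (N : ℕ) (v : V) :
    P C hC N v ∈ C N := by
  rw [P_apply]
  exact Submodule.coe_mem _

lemma P_of_mem (C : ℕ → Submodule k V) (hC : DirectSum.IsInternal C) {N : ℕ} {v : V}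
    (h : v ∈ C N) : P C hC N v = v := by
  rw [P_apply, hC.ofBijective_coeLinearMap_of_mem h]

lemma P_of_mem_ne (C : ℕ → Submodule k V) (hC : DirectSum.IsInternal C) {m N : ℕ} {v : V}
    (h : v ∈ C m) (hne : m ≠ N) : P C hC N v = 0 := by
  rw [P_apply, hC.ofBijective_coeLinearMap_of_mem_ne hne h]
  rfl

/-- Iterated "leading term" map: `lt C hC T m j` is
`P (m+j) ∘ T ∘ P (m+j-1) ∘ ⋯ ∘ P (m+1) ∘ T` (as an endomorphism of `V`). -/
noncomputable def lt (C : ℕ → Submodule k V) (hC : DirectSum.IsInternal C)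
    (T : Module.End k V) (m : ℕ) : ℕ → (V →ₗ[k] V)
  | 0 => LinearMap.id
  | j + 1 => (P C hC (m + j + 1)) ∘ₗ (T ∘ₗ (lt C hC T m j))

@[simp] lemma lt_zero (C : ℕ → Submodule k V) (hC : DirectSum.IsInternal C)
    (T : Module.End k V) (m : ℕ) (v : V) : lt C hC T m 0 v = v := rfl

lemma lt_succ (C : ℕ → Submodule k V) (hC : DirectSum.IsInternal C)
    (T : Module.End k V) (m j : ℕ) (v : V) :
    lt C hC T m (j + 1) v = P C hC (m + j + 1) (T (lt C hC T m j v)) := rfl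

end Stmt5Aux

open Stmt5Aux Polynomial

/-- Under (C1)–(C4), `V`, viewed as a module over `k[X]` with
`X` acting by `T` (i.e. `Module.AEval' T`), is a free `k[X]`-module admitting
an infinite free module basis; in particular it is free of infinite rank. -/
theorem stmt_5
    (k : Type*) [Field k] (V : Type*) [AddCommGroup V] [Module k V]
    (C : ℕ → Submodule k V)
    (hC : DirectSum.IsInternal C)
    (hCne : ∀ n, C n ≠ ⊥)
    (T : Module.End k V)
    (B : ℕ → Submodule k V)
    (hB : ∀ N, B N = ⨆ (n : ℕ) (_ : n ≤ N), C n)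
    -- (C1)
    (C1fin : ∀ n, FiniteDimensional k (C n))
    (C1 : ∀ n : ℕ, (∑ m ∈ Finset.range n, Module.finrank k (C m)) < Module.finrank k (C n))
    -- (C2)
    (C2a : ∀ v ∈ C 0, T v ∈ C 1)
    (C2b : Set.InjOn (⇑T) (C 0 : Set V))
    -- (C3)
    (C3 : ∀ n : ℕ, 1 ≤ n → ∀ v ∈ C n, T v ∈ C (n - 1) ⊔ C n ⊔ C (n + 1))
    -- (C4)
    (C4 : ∀ N : ℕ, ∀ f ∈ B (N + 1), T f ∈ B (N + 1) → f ∈ B N) :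
    ∃ s : Set (Module.AEval' T), s.Infinite ∧
      Nonempty (Module.Basis s (Polynomial k) (Module.AEval' T)) := by
  classical
  -- Basic facts about the filtration `B`.
  have hCB : ∀ n N : ℕ, n ≤ N → C n ≤ B N := by
    intro n N h
    rw [hB N]
    exact le_iSup₂ (f := fun n (_ : n ≤ N) => C n) n h
  have hBmono : ∀ {M N : ℕ}, M ≤ N → B M ≤ B N := by
    intro M N h
    rw [hB M]
    exact iSup₂_le fun n hn => hCB n N (le_trans hn h)
  have hmemB : ∀ v : V, ∃ N, v ∈ B N := by
    intro v
    have h1 : (⊤ : Submodule k V) ≤ ⨆ N, B N := by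
      rw [← hC.submodule_iSup_eq_top]
      exact iSup_le fun n => le_trans (hCB n n le_rfl) (le_iSup B n)
    exact (Submodule.mem_iSup_of_directed B
      ((monotone_nat_of_le_succ (fun n => hBmono (Nat.le_succ n))).directed_le)).mp
      (h1 Submodule.mem_top)
  have hCBbot : ∀ (m r : ℕ), r < m → ∀ v, v ∈ C m → v ∈ B r → v = 0 := by
    intro m r hrm v hvC hvB
    have hdis := hC.submodule_iSupIndep m
    have hBle : B r ≤ ⨆ n, ⨆ (_ : n ≠ m), C n := by
      rw [hB r]
      exact iSup₂_le fun n hn => le_iSup₂ (f := fun n (_ : n ≠ m) => C n) n (by omega)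
    have := hdis.le_bot (Submodule.mem_inf.mpr ⟨hvC, hBle hvB⟩)
    simpa using this
  -- Projection facts relative to `B`.
  have hPB : ∀ (r N : ℕ), r < N → ∀ v ∈ B r, P C hC N v = 0 := by
    intro r N hrN
    have : B r ≤ LinearMap.ker (P C hC N) := by
      rw [hB r]
      refine iSup₂_le fun n hn v hv => ?_
      exact LinearMap.mem_ker.mpr (P_of_mem_ne C hC hv (by omega))
    exact fun v hv => LinearMap.mem_ker.mp (this hv)
  have hPsub : ∀ (r : ℕ) (v : V), v ∈ B (r + 1) → v - P C hC (r + 1) v ∈ B r := by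
    intro r
    have : B (r + 1) ≤ Submodule.comap (LinearMap.id - P C hC (r + 1)) (B r) := by
      rw [hB (r + 1)]
      refine iSup₂_le fun n hn v hv => ?_
      simp only [Submodule.mem_comap, LinearMap.sub_apply, LinearMap.id_apply]
      rcases eq_or_ne n (r + 1) with h | h
      · subst h
        rw [P_of_mem C hC hv]
        simp
      · rw [P_of_mem_ne C hC hv h]
        simpa using hCB n r (by omega) hv
    intro v hv
    simpa using this hv
  have hTB : ∀ (N : ℕ) (v : V), v ∈ B N → T v ∈ B (N + 1) := by
    intro N
    have : B N ≤ Submodule.comap (T : V →ₗ[k] V) (B (N + 1)) := by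
      rw [hB N]
      refine iSup₂_le fun n hn v hv => ?_
      simp only [Submodule.mem_comap]
      rcases n with _ | m
      · exact hCB 1 (N + 1) (by omega) (C2a v hv)
      · have h3 := C3 (m + 1) (by omega) v hv
        have hle : C ((m + 1) - 1) ⊔ C (m + 1) ⊔ C (m + 1 + 1) ≤ B (N + 1) := by
          refine sup_le (sup_le ?_ ?_) ?_ <;> exact hCB _ _ (by omega)
        exact hle h3
    exact fun v hv => this hv
  have hTpow : ∀ (j r : ℕ) (v : V), v ∈ B r → (T ^ j) v ∈ B (r + j) := by
    intro j
    induction j with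
    | zero => intro r v hv; simpa using hv
    | succ j ih =>
      intro r v hv
      have : (T ^ (j + 1)) v = T ((T ^ j) v) := by
        rw [pow_succ']
        rfl
      rw [this]
      exact hTB (r + j) _ (ih r v hv)
  have hTC : ∀ (m : ℕ) (v : V), v ∈ C m → T v - P C hC (m + 1) (T v) ∈ B m := by
    intro m v hv
    exact hPsub m (T v) (hTB m v (hCB m m le_rfl hv))
  -- Injectivity of the leading-term maps.
  have hLinj : ∀ (m : ℕ) (v : V), v ∈ C m → P C hC (m + 1) (T v) = 0 → v = 0 := by
    intro m v hv hP
    rcases m with _ | r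
    · have h1 : T v ∈ C 1 := C2a v hv
      have h2 : T v = 0 := by rw [← P_of_mem C hC h1, hP]
      have h3 : T v = T 0 := by rw [h2, map_zero]
      exact C2b hv (Submodule.zero_mem (C 0)) h3
    · have h1 : T v ∈ B (r + 1) := by
        have := hTC (r + 1) v hv
        rwa [hP, sub_zero] at this
      have h2 : v ∈ B r := C4 r v (hCB (r + 1) (r + 1) le_rfl hv) h1
      exact hCBbot (r + 1) r (by omega) v hv h2
  have hltC : ∀ (m j : ℕ) (v : V), v ∈ C m → lt C hC T m j v ∈ C (m + j) := by
    intro m j v hv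
    induction j with
    | zero => simpa using hv
    | succ j ih => exact P_mem C hC (m + j + 1) _
  have hltT : ∀ (m j : ℕ) (v : V), v ∈ C m →
      (T ^ (j + 1)) v - lt C hC T m (j + 1) v ∈ B (m + j) := by
    intro m j v hv
    induction j with
    | zero =>
      have : (T ^ 1) v = T v := by rw [pow_one]
      rw [this, lt_succ]
      simpa using hTC m v hv
    | succ j ih =>
      have e1 : (T ^ (j + 1 + 1)) v = T ((T ^ (j + 1)) v) := by
        rw [pow_succ']
        rfl
      have key : (T ^ (j + 1 + 1)) v - lt C hC T m (j + 1 + 1) v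
          = T ((T ^ (j + 1)) v - lt C hC T m (j + 1) v)
            + (T (lt C hC T m (j + 1) v)
                - P C hC (m + (j + 1) + 1) (T (lt C hC T m (j + 1) v))) := by
        rw [map_sub, e1, lt_succ]
        abel
      rw [key]
      exact Submodule.add_mem _ (hTB (m + j) _ ih)
        (by simpa using hTC (m + (j + 1)) _ (hltC m (j + 1) v hv))
  have hltinj : ∀ (m j : ℕ) (v : V), v ∈ C m → lt C hC T m j v = 0 → v = 0 := by
    intro m j
    induction j with
    | zero => intro v hv h; simpa using h
    | succ j ih =>
      intro v hv h
      rw [lt_succ] at h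
      have h1 : lt C hC T m j v = 0 := hLinj (m + j) _ (hltC m j v hv) h
      exact ih v hv h1
  -- The key computation: the `N`-th component of `p(T) v` for `v ∈ C m`.
  have hKEY : ∀ (N m : ℕ) (p : Polynomial k) (v : V), v ∈ C m → m + p.natDegree ≤ N →
      P C hC N ((aeval T p) v) = p.coeff (N - m) • lt C hC T m (N - m) v := by
    intro N m p v hv hdeg
    have hmN : m ≤ N := le_trans (Nat.le_add_right _ _) hdeg
    have hPT : P C hC N ((T ^ (N - m)) v) = lt C hC T m (N - m) v := by
      rcases h : N - m with _ | j
      · obtain rfl : m = N := by omega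
        simp [P_of_mem C hC hv]
      · have h1 : m + j + 1 = N := by omega
        have hd := hltT m j v hv
        have hsplit : (T ^ (j + 1)) v
            = ((T ^ (j + 1)) v - lt C hC T m (j + 1) v) + lt C hC T m (j + 1) v := by abel
        rw [hsplit, map_add, hPB (m + j) N (by omega) _ hd, zero_add,
          P_of_mem C hC (by rw [← h1]; exact hltC m (j + 1) v hv)]
    have hexp : (aeval T p) v
        = ∑ j ∈ Finset.range (p.natDegree + 1), p.coeff j • (T ^ j) v := by
      have := Polynomial.aeval_eq_sum_range (R := k) (p := p) T
      rw [this]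
      rw [LinearMap.coe_sum, Finset.sum_apply]
      simp [LinearMap.smul_apply]
    rw [hexp, map_sum]
    simp only [map_smul]
    rw [Finset.sum_eq_single (N - m)]
    · rw [hPT]
    · intro b hb hbne
      have hb' : b ≤ p.natDegree := Finset.mem_range_succ_iff.mp hb
      have : P C hC N ((T ^ b) v) = 0 :=
        hPB (m + b) N (by omega) _ (hTpow b m v (hCB m m le_rfl hv))
      rw [this, smul_zero]
    · intro hnot
      have : p.natDegree < N - m := by
        have := Finset.mem_range_succ_iff.not.mp hnot
        omega
      rw [Polynomial.coeff_eq_zero_of_natDegree_lt this]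
      simp
  -- Choice of the complements `D n`.
  have hD : ∀ n : ℕ, ∃ D : Submodule k V, D ≤ C n ∧ D ≠ ⊥ ∧ (n = 0 → D = C 0) ∧
      ∀ m : ℕ, n = m + 1 →
        ((∀ v ∈ D, v ∈ Submodule.map ((P C hC (m + 1)) ∘ₗ (T : V →ₗ[k] V)) (C m) → v = 0) ∧
          C n ≤ D ⊔ Submodule.map ((P C hC (m + 1)) ∘ₗ (T : V →ₗ[k] V)) (C m)) := by
    intro n
    rcases n with _ | m
    · exact ⟨C 0, le_rfl, hCne 0, fun _ => rfl, fun m hm => absurd hm (by omega)⟩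
    · haveI := C1fin m
      haveI := C1fin (m + 1)
      set E : Submodule k V := Submodule.map ((P C hC (m + 1)) ∘ₗ (T : V →ₗ[k] V)) (C m)
        with hE
      have hEC : E ≤ C (m + 1) := by
        rintro _ ⟨c, hc, rfl⟩
        exact P_mem C hC (m + 1) _
      set E' : Submodule k ↥(C (m + 1)) := E.comap (C (m + 1)).subtype with hE'
      obtain ⟨q, hq⟩ := Submodule.exists_isCompl E'
      refine ⟨q.map (C (m + 1)).subtype, Submodule.map_subtype_le _ _, ?_,
        fun h => absurd h (by omega), ?_⟩
      · -- q ≠ ⊥ via dimension count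
        intro hbot
        have hqbot : q = ⊥ := by
          apply Submodule.map_injective_of_injective (C (m + 1)).injective_subtype
          rw [hbot, Submodule.map_bot]
        have h1 : Module.finrank k E' = Module.finrank k E :=
          (Submodule.comapSubtypeEquivOfLe hEC).finrank_eq
        have h2 : Module.finrank k E ≤ Module.finrank k (C m) :=
          Submodule.finrank_map_le _ _
        have h3 : Module.finrank k (C m) < Module.finrank k (C (m + 1)) := by
          refine lt_of_le_of_lt ?_ (C1 (m + 1))
          exact Finset.single_le_sum (f := fun i => Module.finrank k (C i))
            (fun _ _ => Nat.zero_le _) (Finset.self_mem_range_succ m)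
        have h4 : Module.finrank k E' + Module.finrank k q
            = Module.finrank k (C (m + 1)) := Submodule.finrank_add_eq_of_isCompl hq
        rw [hqbot] at h4
        simp [finrank_bot] at h4
        omega
      · intro m' hm'
        obtain rfl : m = m' := by omega
        constructor
        · rintro v ⟨x, hx, rfl⟩ hvE
          have hxE' : x ∈ E' := by
            rw [hE']
            exact hvE
          have : x ∈ E' ⊓ q := Submodule.mem_inf.mpr ⟨hxE', hx⟩
          have hx0 : x = 0 := by
            have := hq.disjoint.le_bot this
            simpa using this
          rw [hx0]
          rfl
        · intro v hv
          have hx : (⟨v, hv⟩ : ↥(C (m + 1))) ∈ E' ⊔ q := by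
            rw [hq.sup_eq_top]
            trivial
          rcases Submodule.mem_sup.mp hx with ⟨a, ha, b, hb, hab⟩
          refine Submodule.mem_sup.mpr ⟨(b : V), ⟨b, hb, rfl⟩, (a : V), ha, ?_⟩
          have : ((a : V) + b) = v := congrArg Subtype.val hab
          rw [← this]
          abel
  choose D hDC hDne hD0 hDrec using hD
  -- The direct-sum decomposition of `C N` via iterated leading terms of the `D m`.
  have hDL : ∀ (N : ℕ) (d : ℕ → V), (∀ m, d m ∈ D m) →
      (∑ m ∈ Finset.range (N + 1), lt C hC T m (N - m) (d m)) = 0 → ∀ m ≤ N, d m = 0 := by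
    intro N
    induction N with
    | zero =>
      intro d hd hsum m hm
      obtain rfl : m = 0 := Nat.le_zero.mp hm
      simpa using hsum
    | succ N ih =>
      intro d hd hsum m hm
      rw [Finset.sum_range_succ] at hsum
      have hlast : lt C hC T (N + 1) (N + 1 - (N + 1)) (d (N + 1)) = d (N + 1) := by
        rw [Nat.sub_self]
        exact lt_zero C hC T (N + 1) _
      have hterm : ∀ x ∈ Finset.range (N + 1), lt C hC T x (N + 1 - x) (d x)
          = (P C hC (N + 1)) (T (lt C hC T x (N - x) (d x))) := by
        intro x hx
        have hx' : x ≤ N := Finset.mem_range_succ_iff.mp hx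
        have h1 : N + 1 - x = (N - x) + 1 := by omega
        rw [h1, lt_succ]
        have h2 : x + (N - x) + 1 = N + 1 := by omega
        rw [h2]
      rw [Finset.sum_congr rfl hterm, hlast] at hsum
      set w := ∑ x ∈ Finset.range (N + 1), lt C hC T x (N - x) (d x) with hw
      have hPTw : P C hC (N + 1) (T w) = ∑ x ∈ Finset.range (N + 1),
          (P C hC (N + 1)) (T (lt C hC T x (N - x) (d x))) := by
        rw [hw, map_sum, map_sum]
      rw [← hPTw] at hsum
      have hwC : w ∈ C N := by
        rw [hw]
        refine Submodule.sum_mem _ fun x hx => ?_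
        have hx' : x ≤ N := Finset.mem_range_succ_iff.mp hx
        have := hltC x (N - x) (d x) (hDC x (hd x))
        rwa [show x + (N - x) = N by omega] at this
      have h5 : d (N + 1) = -(P C hC (N + 1) (T w)) := eq_neg_of_add_eq_zero_right hsum
      have hdE : d (N + 1) ∈ Submodule.map ((P C hC (N + 1)) ∘ₗ (T : V →ₗ[k] V)) (C N) := by
        rw [h5]
        exact Submodule.neg_mem _ ⟨w, hwC, rfl⟩
      have hd0 : d (N + 1) = 0 := (hDrec (N + 1) N rfl).1 (d (N + 1)) (hd (N + 1)) hdE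
      have hPw0 : P C hC (N + 1) (T w) = 0 := by
        rw [hd0] at hsum
        simpa using hsum
      have hw0 : w = 0 := hLinj N w hwC hPw0
      have hsum0 : ∑ x ∈ Finset.range (N + 1), lt C hC T x (N - x) (d x) = 0 := by
        rw [← hw]; exact hw0
      rcases Nat.lt_or_ge m (N + 1) with h | h
      · exact ih d hd hsum0 m (by omega)
      · obtain rfl : m = N + 1 := by omega
        exact hd0
  -- Bases of the complements.
  have hDnt : ∀ n, Nontrivial ↥(D n) := fun n => Submodule.nontrivial_iff_ne_bot.mpr (hDne n)
  let κ : ℕ → Type _ := fun n => ↥(Module.Basis.ofVectorSpaceIndex k ↥(D n))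
  let bD : ∀ n, Module.Basis (κ n) k ↥(D n) := fun n => Module.Basis.ofVectorSpace k ↥(D n)
  have hκne : ∀ n, Nonempty (κ n) := fun n =>
    haveI := hDnt n
    (bD n).index_nonempty
  let ι : Type _ := (n : ℕ) × κ n
  haveI : Infinite ι := Infinite.of_injective (fun n : ℕ => (⟨n, (hκne n).some⟩ : ι))
    (fun a b h => congrArg Sigma.fst h)
  let F : ι → Module.AEval' T := fun i => Module.AEval'.of T ((bD i.1 i.2 : V))
  -- Spanning.
  have hsp : ⊤ ≤ Submodule.span (Polynomial k) (Set.range F) := by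
    set S : Submodule (Polynomial k) (Module.AEval' T) :=
      Submodule.span (Polynomial k) (Set.range F) with hS
    set K : Submodule k V :=
      (S.restrictScalars k).comap (Module.AEval'.of T).toLinearMap with hK
    have hKmem : ∀ v : V, v ∈ K ↔ Module.AEval'.of T v ∈ S := fun v => Iff.rfl
    have hKT : ∀ v ∈ K, T v ∈ K := by
      intro v hv
      rw [hKmem] at hv ⊢
      have : Module.AEval'.of T (T v) = (X : Polynomial k) • Module.AEval'.of T v :=
        (Module.AEval'.X_smul_of T v).symm
      rw [this]
      exact S.smul_mem _ hv
    have hDK : ∀ n, D n ≤ K := by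
      intro n
      rw [← Submodule.map_subtype_top (D n), ← (bD n).span_eq, Submodule.map_span]
      rw [Submodule.span_le]
      rintro _ ⟨_, ⟨i, rfl⟩, rfl⟩
      rw [SetLike.mem_coe, hKmem]
      exact Submodule.subset_span ⟨⟨n, i⟩, rfl⟩
    have hBK : ∀ N, B N ≤ K := by
      intro N
      induction N with
      | zero =>
        rw [hB 0]
        refine iSup₂_le fun n hn => ?_
        obtain rfl : n = 0 := Nat.le_zero.mp hn
        rw [← hD0 0 rfl]
        exact hDK 0
      | succ N ih =>
        rw [hB (N + 1)]
        refine iSup₂_le fun n hn => ?_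
        rcases Nat.lt_or_ge n (N + 1) with h | h
        · exact le_trans (hCB n N (by omega)) ih
        · obtain rfl : n = N + 1 := by omega
          intro v hv
          have hsup := (hDrec (N + 1) N rfl).2 hv
          rcases Submodule.mem_sup.mp hsup with ⟨a, ha, b, hb, hab⟩
          rcases hb with ⟨c, hc, rfl⟩
          have hcK : c ∈ K := ih (hCB N N le_rfl hc)
          have hTcK : T c ∈ K := hKT c hcK
          have hrest : T c - P C hC (N + 1) (T c) ∈ K := ih (hTC N c hc)
          have hbK : P C hC (N + 1) (T c) ∈ K := by
            have : P C hC (N + 1) (T c) = T c - (T c - P C hC (N + 1) (T c)) := by abel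
            rw [this]
            exact Submodule.sub_mem _ hTcK hrest
          rw [← hab]
          exact Submodule.add_mem _ (hDK (N + 1) ha) hbK
    intro w _
    obtain ⟨N, hN⟩ := hmemB ((Module.AEval'.of T).symm w)
    have := hBK N hN
    rw [hKmem, LinearEquiv.apply_symm_apply] at this
    exact this
  -- Linear independence.
  have hLI : LinearIndependent (Polynomial k) F := by
    rw [linearIndependent_iff']
    intro s g hsum i hi
    by_contra hgi
    set s' : Finset ι := s.filter (fun j => g j ≠ 0) with hs'
    have his' : i ∈ s' := Finset.mem_filter.mpr ⟨hi, hgi⟩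
    have hsum' : ∑ j ∈ s', g j • F j = 0 := by
      rw [hs', Finset.sum_filter_of_ne]
      · exact hsum
      · intro x hx hne h0
        exact hne (by rw [h0, zero_smul])
    have hsumV : ∑ j ∈ s', (aeval T (g j)) ((bD j.1 j.2 : V)) = (0 : V) := by
      have h := congrArg (Module.AEval'.of T).symm hsum'
      rw [map_sum, map_zero] at h
      rw [← h]
      refine Finset.sum_congr rfl fun j hj => ?_
      rw [Module.AEval.of_symm_smul]
      rfl
    obtain ⟨i₀, hi₀, hmax⟩ :=
      Finset.exists_max_image s' (fun j => j.1 + (g j).natDegree) ⟨i, his'⟩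
    obtain ⟨m₀, κ₀⟩ := i₀
    set N : ℕ := m₀ + (g ⟨m₀, κ₀⟩).natDegree with hN
    have hPsum : ∑ j ∈ s',
        (g j).coeff (N - j.1) • lt C hC T j.1 (N - j.1) ((bD j.1 j.2 : V)) = (0 : V) := by
      have h := congrArg (P C hC N) hsumV
      rw [map_sum, map_zero] at h
      rw [← h]
      refine Finset.sum_congr rfl fun j hj => ?_
      exact (hKEY N j.1 (g j) _ (hDC j.1 (bD j.1 j.2).2) (hmax j hj)).symm
    set d : ℕ → V := fun m => ∑ j ∈ s'.filter (fun j => j.1 = m),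
      (g j).coeff (N - m) • ((bD j.1 j.2 : V)) with hd
    have hdD : ∀ m, d m ∈ D m := by
      intro m
      refine Submodule.sum_mem _ fun j hj => ?_
      have hj1 : j.1 = m := (Finset.mem_filter.mp hj).2
      refine Submodule.smul_mem _ _ ?_
      rw [← hj1]
      exact (bD j.1 j.2).2
    have hdsum : ∑ m ∈ Finset.range (N + 1), lt C hC T m (N - m) (d m) = 0 := by
      have hmapsto : ∀ j ∈ s', j.1 ∈ Finset.range (N + 1) := fun j hj =>
        Finset.mem_range_succ_iff.mpr (le_trans (Nat.le_add_right _ _) (hmax j hj))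
      calc ∑ m ∈ Finset.range (N + 1), lt C hC T m (N - m) (d m)
          = ∑ m ∈ Finset.range (N + 1), ∑ j ∈ s'.filter (fun j => j.1 = m),
              (g j).coeff (N - j.1) • lt C hC T j.1 (N - j.1) ((bD j.1 j.2 : V)) := by
            refine Finset.sum_congr rfl fun m hm => ?_
            rw [hd, map_sum]
            refine Finset.sum_congr rfl ?_
            rintro ⟨j1, j2⟩ hj
            obtain rfl : j1 = m := (Finset.mem_filter.mp hj).2
            rw [map_smul]
        _ = ∑ j ∈ s', (g j).coeff (N - j.1) • lt C hC T j.1 (N - j.1) ((bD j.1 j.2 : V)) :=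
            Finset.sum_fiberwise_of_maps_to hmapsto _
        _ = 0 := hPsum
    have hdz := hDL N d hdD hdsum
    have hd0 : d m₀ = 0 := hdz m₀ (Nat.le_add_right _ _)
    obtain ⟨φ, hφ⟩ := LinearMap.exists_extend ((bD m₀).coord κ₀)
    have hphi : ∀ x : ↥(D m₀), φ (x : V) = (bD m₀).coord κ₀ x := by
      intro x
      rw [← hφ]
      rfl
    have h0 : φ (d m₀) = 0 := by rw [hd0, map_zero]
    rw [hd] at h0
    rw [map_sum] at h0
    have hmemi : (⟨m₀, κ₀⟩ : ι) ∈ s'.filter (fun j => j.1 = m₀) :=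
      Finset.mem_filter.mpr ⟨hi₀, rfl⟩
    rw [Finset.sum_eq_single_of_mem _ hmemi] at h0
    · rw [map_smul, hphi, Module.Basis.coord_apply, Module.Basis.repr_self] at h0
      simp only [Finsupp.single_eq_same, smul_eq_mul, mul_one] at h0
      have hlc : (g ⟨m₀, κ₀⟩).coeff ((g ⟨m₀, κ₀⟩).natDegree) = 0 := by
        rwa [show N - m₀ = (g ⟨m₀, κ₀⟩).natDegree by omega] at h0
      exact (Finset.mem_filter.mp hi₀).2 (Polynomial.leadingCoeff_eq_zero.mp hlc)
    · rintro ⟨j1, j2⟩ hj hne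
      have hj1 : j1 = m₀ := (Finset.mem_filter.mp hj).2
      subst hj1
      have hj2 : j2 ≠ κ₀ := by
        intro h
        exact hne (by rw [h])
      rw [map_smul, hphi, Module.Basis.coord_apply, Module.Basis.repr_self]
      rw [Finsupp.single_eq_of_ne hj2.symm]
      simp
  -- Assemble the basis.
  let bas : Module.Basis ι (Polynomial k) (Module.AEval' T) := Module.Basis.mk hLI hsp
  refine ⟨Set.range ⇑bas, ?_, ⟨bas.reindexRange⟩⟩
  exact Set.infinite_range_of_injective bas.injective
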